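/- Let C be a commutative unital ring, G a semigroup with zero, and S the set of ~-equivalence classes of G other than the class of 0. Then there exists a minimal C-linear trace t : \overline{CG} → C^{(S)}, where C^{(S)} is the C-algebra of finitely supported functions S → C with pointwise operations (the direct sum of |S| copies of C). -/

import Mathlib

/-- The one-step relation: `x = a*b` and `y = b*a`. -/
def simStep {G : Type*} [Mul G] (x y : G) : Prop := ∃ a b : G, x = a * b ∧ y = b * a

/-- The relation `~` on a semigroup: the reflexive-transitive closure of `simStep`. -/
def sim {G : Type*} [Mul G] : G → G → Prop := Relation.ReflTransGen simStep

theorem sim_equiv {G : Type*} [Mul G] : Equivalence (sim (G := G)) :=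
  ⟨fun _ => Relation.ReflTransGen.refl,
   fun {x y} h => by
      change Relation.ReflTransGen simStep x y at h
      change Relation.ReflTransGen simStep y x
      induction h with
      | refl => exact Relation.ReflTransGen.refl
      | tail _ hbc ih =>
        obtain ⟨a, b, h1, h2⟩ := hbc
        exact Relation.ReflTransGen.head ⟨b, a, h2, h1⟩ ih,
   fun h1 h2 => Relation.ReflTransGen.trans h1 h2⟩

/-- The setoid on `G` given by `~`. -/
def simSetoid (G : Type*) [Mul G] : Setoid G := ⟨sim, sim_equiv⟩

/-- The additive subgroup `[A,A]` generated by commutators. -/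
def commutatorSubgroup (A : Type*) [NonUnitalNonAssocRing A] : AddSubgroup A :=
  AddSubgroup.closure {x | ∃ a b : A, x = a * b - b * a}

/-- The ideal `I₀` of the semigroup ring `CG` consisting of functions supported in `{0}`. -/
noncomputable def I0 (C G : Type*) [CommRing C] [SemigroupWithZero G] :
    TwoSidedIdeal (MonoidAlgebra C G) :=
  TwoSidedIdeal.mk' {f : MonoidAlgebra C G | ∀ g : G, g ≠ 0 → f.coeff g = 0}
    (fun _ _ => rfl)
    (fun {x y} hx hy g hg => by
      show (x + y).coeff g = 0
      rw [MonoidAlgebra.coeff_add, Finsupp.add_apply, hx g hg, hy g hg, add_zero])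
    (fun {x} hx g hg => by
      show (-x).coeff g = 0
      rw [MonoidAlgebra.coeff_neg, Finsupp.neg_apply, hx g hg, neg_zero])
    (fun {x y} hy g hg => by
      classical
      rw [MonoidAlgebra.mul_apply]
      rw [Finsupp.sum]
      refine Finset.sum_eq_zero fun a _ => ?_
      rw [Finsupp.sum]
      refine Finset.sum_eq_zero fun b hb => ?_
      have hb0 : b = 0 := by
        by_contra h
        exact Finsupp.mem_support_iff.mp hb (hy b h)
      subst hb0
      rw [mul_zero, if_neg fun h => hg h.symm])
    (fun {x y} hx g hg => by
      classical
      rw [MonoidAlgebra.mul_apply]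
      rw [Finsupp.sum]
      refine Finset.sum_eq_zero fun a ha => ?_
      rw [Finsupp.sum]
      refine Finset.sum_eq_zero fun b _ => ?_
      have ha0 : a = 0 := by
        by_contra h
        exact Finsupp.mem_support_iff.mp ha (hx a h)
      subst ha0
      rw [zero_mul, if_neg fun h => hg h.symm])

/-- The contracted semigroup ring `\overline{CG} = CG / I₀`. -/
abbrev ContractedSemigroupRing (C G : Type*) [CommRing C] [SemigroupWithZero G] :=
  (I0 C G).ringCon.Quotient

/-- The quotient map `π : CG → \overline{CG}`. -/
noncomputable def toCSR (C G : Type*) [CommRing C] [SemigroupWithZero G]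
    (f : MonoidAlgebra C G) : ContractedSemigroupRing C G := f

/-- The map `f ↦ ∑_g f(g) • δ(g)` from `CG` to `R`. -/
def elemSum (C : Type*) {G R : Type*} [CommRing C] [SemigroupWithZero G]
    [AddCommMonoid R] [Module C R] (δ : G → R) (f : MonoidAlgebra C G) : R :=
  f.coeff.sum fun g c => c • δ g

section Aux

variable {C G : Type*} [CommRing C] [SemigroupWithZero G]

/-- The map `CG → C^{(G/~)}` summing coefficients over `~`-classes. -/
noncomputable def PhiCG (f : MonoidAlgebra C G) : Quotient (simSetoid G) →₀ C :=
  Finsupp.mapDomain (Quotient.mk (simSetoid G)) f.coeff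

/-- The trace on `CG`: `PhiCG` with the class of `0` discarded. -/
noncomputable def TrCG (f : MonoidAlgebra C G) :
    {s : Quotient (simSetoid G) // s ≠ Quotient.mk (simSetoid G) 0} →₀ C :=
  Finsupp.subtypeDomain _ (PhiCG f)

lemma PhiCG_add (f g : MonoidAlgebra C G) : PhiCG (f + g) = PhiCG f + PhiCG g :=
  Finsupp.mapDomain_add

lemma PhiCG_single (g : G) (c : C) :
    PhiCG (MonoidAlgebra.single g c : MonoidAlgebra C G)
      = Finsupp.single (Quotient.mk (simSetoid G) g) c :=
  Finsupp.mapDomain_single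

lemma PhiCG_mul_comm (f g : MonoidAlgebra C G) : PhiCG (f * g) = PhiCG (g * f) := by
  induction f using MonoidAlgebra.induction_linear with
  | zero => simp
  | add f1 f2 h1 h2 => rw [add_mul, mul_add, PhiCG_add, PhiCG_add, h1, h2]
  | single a r =>
    induction g using MonoidAlgebra.induction_linear with
    | zero => simp
    | add g1 g2 h1 h2 => rw [mul_add, add_mul, PhiCG_add, PhiCG_add, h1, h2]
    | single b d =>
      show PhiCG (MonoidAlgebra.single a r * MonoidAlgebra.single b d) = _
      rw [MonoidAlgebra.single_mul_single, MonoidAlgebra.single_mul_single]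
      show PhiCG (MonoidAlgebra.single (a * b) (r * d) : MonoidAlgebra C G) = _
      rw [PhiCG_single, PhiCG_single, mul_comm r d]
      congr 1
      exact Quotient.sound (Relation.ReflTransGen.single ⟨a, b, rfl, rfl⟩)

lemma TrCG_add (f g : MonoidAlgebra C G) : TrCG (f + g) = TrCG f + TrCG g := by
  rw [TrCG, PhiCG_add, Finsupp.subtypeDomain_add]; rfl

lemma TrCG_single_zero (c : C) : TrCG (MonoidAlgebra.single (0 : G) c : MonoidAlgebra C G) = 0 := by
  ext ⟨s, hs⟩
  rw [TrCG, PhiCG_single]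
  exact Finsupp.single_eq_of_ne' fun h => hs h.symm

lemma TrCG_eq_of_rel {f g : MonoidAlgebra C G} (h : (I0 C G).ringCon f g) :
    TrCG f = TrCG g := by
  have hmem : f - g ∈ I0 C G := (TwoSidedIdeal.rel_iff _ _ _).mp h
  have hsup : ∀ a : G, a ≠ 0 → (f - g).coeff a = 0 :=
    (TwoSidedIdeal.mem_mk' _ _ _ _ _ _ (f - g)).mp hmem
  have hfg : f - g = MonoidAlgebra.single (0 : G) ((f - g).coeff 0) := by
    ext a
    rcases eq_or_ne a 0 with rfl | ha
    · rw [MonoidAlgebra.coeff_single, Finsupp.single_eq_same]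
    · rw [hsup a ha, MonoidAlgebra.coeff_single, Finsupp.single_eq_of_ne' fun h' => ha h'.symm]
  have : TrCG (f - g) = 0 := by rw [hfg]; exact TrCG_single_zero _
  have h2 : TrCG (g + (f - g)) = TrCG g + TrCG (f - g) := TrCG_add _ _
  rw [add_sub_cancel] at h2
  rw [h2, this, add_zero]

lemma TrCG_smul (c : C) (f : MonoidAlgebra C G) : TrCG (c • f) = c • TrCG f := by
  have h : PhiCG (c • f) = c • PhiCG (C := C) f := Finsupp.mapDomain_smul c f.coeff
  ext a
  rw [TrCG, h]
  simp [Finsupp.subtypeDomain_apply, TrCG]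

/-- Coercion to the quotient of a single supported on `g`, with `sim g h`,
differs from that on `h` by a sum of commutators. -/
lemma single_sub_single_mem {g h : G} (hsim : sim g h) (r : C) :
    toCSR C G (MonoidAlgebra.single g r) - toCSR C G (MonoidAlgebra.single h r)
      ∈ commutatorSubgroup (ContractedSemigroupRing C G) := by
  induction hsim with
  | refl => simpa using (commutatorSubgroup (ContractedSemigroupRing C G)).zero_mem
  | tail hab hbc ih =>
    rename_i mid last
    obtain ⟨a, b, hmid, hlast⟩ := hbc
    subst hmid hlast
    have key : toCSR C G (MonoidAlgebra.single (a * b) r)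
        - toCSR C G (MonoidAlgebra.single (b * a) r)
        ∈ commutatorSubgroup (ContractedSemigroupRing C G) := by
      have e1 : MonoidAlgebra.single (M := G) (a * b) r
          = MonoidAlgebra.single a r * MonoidAlgebra.single b (1 : C) := by
        rw [MonoidAlgebra.single_mul_single, mul_one]
      have e2 : MonoidAlgebra.single (M := G) (b * a) r
          = MonoidAlgebra.single b (1 : C) * MonoidAlgebra.single a r := by
        rw [MonoidAlgebra.single_mul_single, one_mul]
      have e3 : ∀ u v : MonoidAlgebra C G, toCSR C G (u * v) = toCSR C G u * toCSR C G v :=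
        fun u v => RingCon.coe_mul _ u v
      rw [e1, e2, e3, e3]
      exact AddSubgroup.subset_closure ⟨_, _, rfl⟩
    have := (commutatorSubgroup (ContractedSemigroupRing C G)).add_mem ih key
    rwa [sub_add_sub_cancel] at this

lemma coe_single_zero_eq_zero (r : C) :
    toCSR C G (MonoidAlgebra.single (0 : G) r) = 0 := by
  rw [show (0 : ContractedSemigroupRing C G) = toCSR C G 0 from (RingCon.coe_zero _).symm]
  show ((MonoidAlgebra.single (0 : G) r : MonoidAlgebra C G) : ContractedSemigroupRing C G)
    = ((0 : MonoidAlgebra C G) : ContractedSemigroupRing C G)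
  rw [RingCon.eq, TwoSidedIdeal.rel_iff, sub_zero]
  refine (TwoSidedIdeal.mem_mk' _ _ _ _ _ _ _).mpr fun a ha => ?_
  exact Finsupp.single_eq_of_ne' fun h' => ha h'.symm

lemma single_zeroClass_mem {g : G} (hsim : sim g 0) (r : C) :
    toCSR C G (MonoidAlgebra.single g r)
      ∈ commutatorSubgroup (ContractedSemigroupRing C G) := by
  have h := single_sub_single_mem (C := C) hsim r
  rwa [coe_single_zero_eq_zero, sub_zero] at h

lemma toCSR_add (f g : MonoidAlgebra C G) :
    toCSR C G (f + g) = toCSR C G f + toCSR C G g :=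
  RingCon.coe_add _ f g

lemma sub_mapDomain_mem (f : MonoidAlgebra C G) :
    (toCSR C G f
      - toCSR C G (MonoidAlgebra.ofCoeff
        (Finsupp.mapDomain (fun g : G => (Quotient.mk (simSetoid G) g).out) f.coeff)))
      ∈ commutatorSubgroup (ContractedSemigroupRing C G) := by
  induction f using MonoidAlgebra.induction with
  | zero => simpa [Finsupp.mapDomain_zero] using
      (commutatorSubgroup (ContractedSemigroupRing C G)).zero_mem
  | single_add a r f _ _ ih =>
    rw [MonoidAlgebra.coeff_add, MonoidAlgebra.coeff_single, Finsupp.mapDomain_add,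
      Finsupp.mapDomain_single, MonoidAlgebra.ofCoeff_add, MonoidAlgebra.ofCoeff_single,
      toCSR_add, toCSR_add,
      add_sub_add_comm]
    have hsim : sim a ((Quotient.mk (simSetoid G) a).out) :=
      Quotient.exact (Quotient.out_eq (Quotient.mk (simSetoid G) a)).symm
    exact (commutatorSubgroup (ContractedSemigroupRing C G)).add_mem
      (single_sub_single_mem hsim r) ih

end Aux

/-- For any commutative unital ring `C` and semigroup with zero `G`,
the contracted semigroup ring `\overline{CG}` admits a minimal `C`-linear trace with values
in `C^{(S)}`, the direct sum of copies of `C` indexed by the nonzero `~`-classes `S`. -/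
theorem semigroupRing_exists_minimal_trace
    (C G : Type*) [CommRing C] [SemigroupWithZero G] :
    ∃ t : ContractedSemigroupRing C G →
        ({s : Quotient (simSetoid G) // s ≠ Quotient.mk (simSetoid G) 0} →₀ C),
      (∀ x y : ContractedSemigroupRing C G, t (x + y) = t x + t y) ∧
      (∀ x y : ContractedSemigroupRing C G, t (x * y) = t (y * x)) ∧
      (∀ (c : C) (f : MonoidAlgebra C G),
        t (toCSR C G (c • f)) = c • t (toCSR C G f)) ∧
      (∀ x : ContractedSemigroupRing C G, t x = 0 →
        x ∈ commutatorSubgroup (ContractedSemigroupRing C G)) := by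
  classical
  refine ⟨Quotient.lift (TrCG (C := C) (G := G))
      (fun a b h => TrCG_eq_of_rel h), ?_, ?_, ?_, ?_⟩
  · intro x y
    induction x using Quotient.ind with | _ f => ?_
    induction y using Quotient.ind with | _ g => ?_
    show Quotient.lift _ _ (((f : MonoidAlgebra C G) : ContractedSemigroupRing C G)
        + ((g : MonoidAlgebra C G) : ContractedSemigroupRing C G)) = _
    rw [← RingCon.coe_add]
    exact TrCG_add f g
  · intro x y
    induction x using Quotient.ind with | _ f => ?_
    induction y using Quotient.ind with | _ g => ?_
    show Quotient.lift _ _ (((f : MonoidAlgebra C G) : ContractedSemigroupRing C G)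
        * ((g : MonoidAlgebra C G) : ContractedSemigroupRing C G))
      = Quotient.lift _ _ (((g : MonoidAlgebra C G) : ContractedSemigroupRing C G)
        * ((f : MonoidAlgebra C G) : ContractedSemigroupRing C G))
    rw [← RingCon.coe_mul, ← RingCon.coe_mul]
    show TrCG (f * g) = TrCG (g * f)
    rw [TrCG, TrCG, PhiCG_mul_comm]
  · intro c f
    show TrCG (c • f) = c • TrCG f
    exact TrCG_smul c f
  · intro x hx
    induction x using Quotient.ind with | _ f => ?_
    have hTf : TrCG (C := C) (G := G) f = 0 := hx
    set rep : G → G := fun g => (Quotient.mk (simSetoid G) g).out with hrep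
    set s0 : Quotient (simSetoid G) := Quotient.mk (simSetoid G) 0 with hs0
    have hPhi : PhiCG (C := C) f = Finsupp.single s0 (PhiCG (C := C) f s0) := by
      ext s
      rcases eq_or_ne s s0 with rfl | hs
      · rw [Finsupp.single_eq_same]
      · have h1 : PhiCG (C := C) f s
            = TrCG (C := C) (G := G) f ⟨s, hs⟩ := rfl
        rw [h1, hTf, Finsupp.coe_zero, Pi.zero_apply,
          Finsupp.single_eq_of_ne' fun h' => hs h'.symm]
    have hmap : Finsupp.mapDomain rep f.coeff
        = Finsupp.single (s0.out) (PhiCG (C := C) f s0) := by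
      have hcomp : Finsupp.mapDomain rep f.coeff
          = Finsupp.mapDomain (Quotient.out) (PhiCG (C := C) f) := by
        rw [PhiCG, ← Finsupp.mapDomain_comp]
        rfl
      rw [hcomp, hPhi, Finsupp.mapDomain_single]
      simp [Finsupp.single_eq_same]
    have hsim0 : sim (s0.out) (0 : G) := Quotient.exact (Quotient.out_eq s0)
    have hmem2 : toCSR C G (MonoidAlgebra.ofCoeff (Finsupp.mapDomain rep f.coeff))
        ∈ commutatorSubgroup (ContractedSemigroupRing C G) := by
      rw [hmap]
      exact single_zeroClass_mem hsim0 _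
    have hmem1 := sub_mapDomain_mem (C := C) f
    have := (commutatorSubgroup (ContractedSemigroupRing C G)).add_mem hmem1 hmem2
    rwa [sub_add_cancel] at this
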